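/- Let X be an obtuse random variable in C^N with probabilities p_1, ..., p_{N+1}, and let Y be another C^N-valued random variable on the same probability space. Then Y is an obtuse random variable with the same probabilities if and only if there exists a unitary operator U on C^N with Y = U X. -/

import Mathlib

open scoped BigOperators InnerProductSpace ComplexConjugate

open Finset Matrix in
/-- Key structural facts about an obtuse family: the "completed Gram" identity, and
that no nonzero vector is orthogonal to all the `v j`. -/
lemma obtuse_aux (N : ℕ)
    (v : Fin (N + 1) → EuclideanSpace ℂ (Fin N))
    (p : Fin (N + 1) → ℝ) (hp : ∀ i, 0 < p i) (hp1 : ∑ i, p i = 1)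
    (hc : ∀ k, ∑ i, (p i : ℂ) * v i k = 0)
    (hn : ∀ k l, ∑ i, (p i : ℂ) * ((starRingEnd ℂ) (v i k) * v i l)
        = if k = l then 1 else 0) :
    (∀ j j', ((Real.sqrt (p j) : ℂ)) * ((Real.sqrt (p j')) : ℂ) *
        (1 + ∑ k, (starRingEnd ℂ) (v j k) * v j' k) = if j = j' then 1 else 0)
    ∧ ∀ u : EuclideanSpace ℂ (Fin N),
        (∀ j, ∑ k, (starRingEnd ℂ) (v j k) * u k = 0) → u = 0 := by
  classical
  set A : Matrix (Fin (N + 1)) (Fin (N + 1)) ℂ :=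
    Matrix.of fun i j => ((Real.sqrt (p j) : ℝ) : ℂ) * (Fin.cons (1:ℂ) (fun k => v j k) : Fin (N+1) → ℂ) i with hA
  have hsq : ∀ j, ((Real.sqrt (p j) : ℝ) : ℂ) * ((Real.sqrt (p j) : ℝ) : ℂ) = (p j : ℂ) := by
    intro j
    rw [← Complex.ofReal_mul, Real.mul_self_sqrt (hp j).le]
  have hAAH : A * A.conjTranspose = 1 := by
    ext i i'
    rw [Matrix.mul_apply]
    simp only [Matrix.conjTranspose_apply, hA, Matrix.of_apply, star_mul', Complex.star_def, Complex.conj_ofReal]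
    have key : ∀ j : Fin (N + 1),
        ((Real.sqrt (p j) : ℝ) : ℂ) * (Fin.cons (1:ℂ) (fun k => v j k) : Fin (N+1) → ℂ) i *
          (((Real.sqrt (p j) : ℝ) : ℂ) * (starRingEnd ℂ) ((Fin.cons (1:ℂ) (fun k => v j k) : Fin (N+1) → ℂ) i'))
          = (p j : ℂ) * ((Fin.cons (1:ℂ) (fun k => v j k) : Fin (N+1) → ℂ) i * (starRingEnd ℂ) ((Fin.cons (1:ℂ) (fun k => v j k) : Fin (N+1) → ℂ) i')) := by
      intro j
      rw [← hsq j]; ring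
    rw [Finset.sum_congr rfl fun j _ => key j]
    induction i using Fin.cases with
    | zero =>
      induction i' using Fin.cases with
      | zero =>
        simp only [Fin.cons_zero, _root_.map_one, one_mul, mul_one, Matrix.one_apply_eq]
        rw [← Complex.ofReal_sum, hp1, Complex.ofReal_one]
      | succ k =>
        have : ∑ j, (p j : ℂ) * ((Fin.cons (1:ℂ) (fun k => v j k) : Fin (N+1) → ℂ) 0 *
            (starRingEnd ℂ) ((Fin.cons (1:ℂ) (fun k => v j k) : Fin (N+1) → ℂ) k.succ))
            = (starRingEnd ℂ) (∑ j, (p j : ℂ) * v j k) := by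
          rw [map_sum]
          refine Finset.sum_congr rfl fun j _ => ?_
          simp [Complex.conj_ofReal]
        rw [this, hc, map_zero, Matrix.one_apply_ne (Fin.succ_ne_zero k).symm]
    | succ k =>
      induction i' using Fin.cases with
      | zero =>
        have : ∑ j, (p j : ℂ) * ((Fin.cons (1:ℂ) (fun k => v j k) : Fin (N+1) → ℂ) k.succ *
            (starRingEnd ℂ) ((Fin.cons (1:ℂ) (fun k => v j k) : Fin (N+1) → ℂ) 0)) = ∑ j, (p j : ℂ) * v j k := by
          refine Finset.sum_congr rfl fun j _ => ?_
          simp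
        rw [this, hc, Matrix.one_apply_ne (Fin.succ_ne_zero k)]
      | succ l =>
        have : ∑ j, (p j : ℂ) * ((Fin.cons (1:ℂ) (fun k => v j k) : Fin (N+1) → ℂ) k.succ *
            (starRingEnd ℂ) ((Fin.cons (1:ℂ) (fun k => v j k) : Fin (N+1) → ℂ) l.succ))
            = ∑ j, (p j : ℂ) * ((starRingEnd ℂ) (v j l) * v j k) := by
          refine Finset.sum_congr rfl fun j _ => ?_
          simp only [Fin.cons_succ]; ring
        rw [this, hn, Matrix.one_apply]
        simp [Fin.succ_inj, eq_comm]
  have hAHA : A.conjTranspose * A = 1 := mul_eq_one_comm.mp hAAH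
  constructor
  · intro j j'
    have h := congrFun (congrFun hAHA j) j'
    rw [Matrix.mul_apply] at h
    simp only [Matrix.conjTranspose_apply, hA, Matrix.of_apply, star_mul', Complex.star_def,
      Complex.conj_ofReal] at h
    have expand : ∑ i, ((Real.sqrt (p j) : ℝ) : ℂ) * (starRingEnd ℂ) ((Fin.cons (1:ℂ) (fun k => v j k) : Fin (N+1) → ℂ) i) *
        (((Real.sqrt (p j') : ℝ) : ℂ) * (Fin.cons (1:ℂ) (fun k => v j' k) : Fin (N+1) → ℂ) i)
        = ((Real.sqrt (p j) : ℝ) : ℂ) * ((Real.sqrt (p j') : ℝ) : ℂ) *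
          (1 + ∑ k, (starRingEnd ℂ) (v j k) * v j' k) := by
      rw [Fin.sum_univ_succ]
      simp only [Fin.cons_zero, Fin.cons_succ, _root_.map_one, one_mul, mul_one]
      rw [mul_add, mul_one, Finset.mul_sum]
      congr 1
      exact Finset.sum_congr rfl fun k _ => by ring
    rw [expand] at h
    rw [h, Matrix.one_apply]
  · intro u hu
    set c : Fin (N + 1) → ℂ := (Fin.cons (0:ℂ) (fun k => (starRingEnd ℂ) (u k)) : Fin (N+1) → ℂ) with hcdef
    have hcA : c ᵥ* A = 0 := by
      funext j
      rw [Matrix.vecMul, dotProduct]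
      simp only [hA, Matrix.of_apply]
      have : ∀ i, c i * (((Real.sqrt (p j) : ℝ) : ℂ) * (Fin.cons (1:ℂ) (fun k => v j k) : Fin (N+1) → ℂ) i)
          = ((Real.sqrt (p j) : ℝ) : ℂ) * (c i * (Fin.cons (1:ℂ) (fun k => v j k) : Fin (N+1) → ℂ) i) := fun i => by ring
      rw [Finset.sum_congr rfl fun i _ => this i, ← Finset.mul_sum]
      rw [Fin.sum_univ_succ]
      simp only [hcdef, Fin.cons_zero, Fin.cons_succ, zero_mul, zero_add]
      have : ∑ k, (starRingEnd ℂ) (u k) * v j k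
          = (starRingEnd ℂ) (∑ k, (starRingEnd ℂ) (v j k) * u k) := by
        rw [map_sum]
        refine Finset.sum_congr rfl fun k _ => ?_
        simp [mul_comm]
      rw [this, hu j, map_zero, mul_zero]
      rfl
    have hc0 : c = 0 := by
      have := congrArg (fun x => x ᵥ* A.conjTranspose) hcA
      simpa [Matrix.vecMul_vecMul, hAAH, Matrix.vecMul_one, Matrix.zero_vecMul] using this
    ext k
    have := congrFun hc0 k.succ
    simp only [hcdef, Fin.cons_succ, Pi.zero_apply] at this
    simpa using congrArg (starRingEnd ℂ) this

/-- **Uniqueness of obtuse random variables up to unitaries.**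
Let `X` be an obtuse random variable in `ℂ^N` taking the values `v i` with positive
probabilities `p i`, and let `Y` be another `ℂ^N`-valued random variable on the same
probability space, with values `w i`.  Then `Y` is an obtuse random variable with the
same probabilities if and only if there is a unitary `U` of `ℂ^N` with `Y = U X`. -/
theorem obtuse_unique_up_to_unitary (N : ℕ)
    (v : Fin (N + 1) → EuclideanSpace ℂ (Fin N)) (hv : Function.Injective v)
    (p : Fin (N + 1) → ℝ) (hp : ∀ i, 0 < p i) (hp1 : ∑ i, p i = 1)
    (hc : ∀ k, ∑ i, (p i : ℂ) * v i k = 0)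
    (hn : ∀ k l, ∑ i, (p i : ℂ) * ((starRingEnd ℂ) (v i k) * v i l)
        = if k = l then 1 else 0)
    (w : Fin (N + 1) → EuclideanSpace ℂ (Fin N)) :
    (Function.Injective w ∧
      (∀ k, ∑ i, (p i : ℂ) * w i k = 0) ∧
      (∀ k l, ∑ i, (p i : ℂ) * ((starRingEnd ℂ) (w i k) * w i l)
        = if k = l then 1 else 0))
    ↔ ∃ U : EuclideanSpace ℂ (Fin N) ≃ₗᵢ[ℂ] EuclideanSpace ℂ (Fin N),
        ∀ i, w i = U (v i) := by
  classical
  constructor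
  · rintro ⟨hw_inj, hwc, hwn⟩
    obtain ⟨gv, sv⟩ := obtuse_aux N v p hp hp1 hc hn
    obtain ⟨gw, _⟩ := obtuse_aux N w p hp hp1 hwc hwn
    -- the two Gram matrices agree
    have hsne : ∀ j, ((Real.sqrt (p j) : ℝ) : ℂ) ≠ 0 := by
      intro j
      simpa using (Real.sqrt_ne_zero'.mpr (hp j))
    have hVW : ∀ i j, (⟪v i, v j⟫_ℂ) = ⟪w i, w j⟫_ℂ := by
      intro i j
      have h1 := (gv i j).trans (gw i j).symm
      have h2 := mul_left_cancel₀ (mul_ne_zero (hsne i) (hsne j)) h1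
      have h3 := add_left_cancel h2
      simp only [PiLp.inner_apply, RCLike.inner_apply']
      exact h3
    -- the linear combination maps
    set f := Fintype.linearCombination ℂ v with hf
    set g := Fintype.linearCombination ℂ w with hg
    have hfv : ∀ i, f (Pi.single i 1) = v i := by
      intro i; rw [hf, Fintype.linearCombination_apply_single, one_smul]
    have hgw : ∀ i, g (Pi.single i 1) = w i := by
      intro i; rw [hg, Fintype.linearCombination_apply_single, one_smul]
    have hinner : ∀ c d, (⟪f c, f d⟫_ℂ) = ⟪g c, g d⟫_ℂ := by
      intro c d
      rw [hf, hg, Fintype.linearCombination_apply, Fintype.linearCombination_apply,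
        Fintype.linearCombination_apply, Fintype.linearCombination_apply,
        sum_inner, sum_inner]
      refine Finset.sum_congr rfl fun i _ => ?_
      rw [inner_sum, inner_sum]
      refine Finset.sum_congr rfl fun j _ => ?_
      rw [inner_smul_left, inner_smul_left, inner_smul_right, inner_smul_right, hVW]
    -- f is surjective
    have hfsurj : Function.Surjective f := by
      rw [← LinearMap.range_eq_top, ← Submodule.orthogonal_eq_bot_iff]
      rw [Submodule.eq_bot_iff]
      intro u hu
      refine sv u fun j => ?_
      have := hu (v j) ⟨Pi.single j 1, hfv j⟩
      simpa only [PiLp.inner_apply, RCLike.inner_apply'] using this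
    obtain ⟨s, hs⟩ := f.exists_rightInverse_of_surjective (LinearMap.range_eq_top.2 hfsurj)
    set U₀ := g ∘ₗ s with hU₀
    have hgker : ∀ c, f c = 0 → g c = 0 := by
      intro c hcz
      have : (⟪g c, g c⟫_ℂ) = 0 := by rw [← hinner, hcz, inner_zero_right]
      exact inner_self_eq_zero.mp this
    have hUf : ∀ c, U₀ (f c) = g c := by
      intro c
      have h1 : f (s (f c) - c) = 0 := by
        rw [map_sub, sub_eq_zero]
        exact congrFun (congrArg (fun t => t.toFun) hs) (f c)
      have h2 := hgker _ h1
      rw [map_sub, sub_eq_zero] at h2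
      simpa [hU₀] using h2
    have hUinner : ∀ x y, (⟪U₀ x, U₀ y⟫_ℂ) = ⟪x, y⟫_ℂ := by
      intro x y
      obtain ⟨c, rfl⟩ := hfsurj x
      obtain ⟨d, rfl⟩ := hfsurj y
      rw [hUf, hUf, ← hinner]
    have hUinj : Function.Injective U₀ := by
      intro x y hxy
      have : (⟪x - y, x - y⟫_ℂ) = 0 := by
        rw [← hUinner, map_sub, hxy, sub_self, inner_zero_left]
      rw [inner_self_eq_zero, sub_eq_zero] at this
      exact this
    have hUbij : Function.Bijective U₀ :=
      ⟨hUinj, LinearMap.injective_iff_surjective.mp hUinj⟩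
    refine ⟨LinearEquiv.isometryOfInner (LinearEquiv.ofBijective U₀ hUbij) ?_, ?_⟩
    · intro x y; exact hUinner x y
    · intro i
      have : U₀ (v i) = w i := by rw [← hfv i, hUf, hgw]
      exact this.symm
  · rintro ⟨U, hU⟩
    have hz : (∑ i, (p i : ℂ) • v i) = 0 := by
      ext k
      have : (∑ i, (p i : ℂ) • v i) k = ∑ i, (p i : ℂ) * v i k := by
        rw [WithLp.ofLp_sum, Finset.sum_apply]
        rfl
      rw [this, hc k]
      rfl
    refine ⟨?_, ?_, ?_⟩
    · intro i j hij
      rw [hU i, hU j] at hij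
      exact hv (U.injective hij)
    · intro k
      have h1 : ∀ i, (p i : ℂ) * w i k = ((p i : ℂ) • U (v i)) k := by
        intro i; rw [hU i]; rfl
      rw [Finset.sum_congr rfl fun i _ => h1 i, ← Finset.sum_apply, ← WithLp.ofLp_sum]
      have h2 : (∑ i, (p i : ℂ) • U (v i)) = U (∑ i, (p i : ℂ) • v i) := by
        rw [map_sum]
        exact Finset.sum_congr rfl fun i _ => (U.map_smul _ _).symm
      rw [h2, hz, map_zero]
      rfl
    · intro k l
      -- reduce to inner products
      have hproj : ∀ (x : EuclideanSpace ℂ (Fin N)) (m : Fin N),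
          (⟪(EuclideanSpace.single m (1:ℂ) : EuclideanSpace ℂ (Fin N)), x⟫_ℂ) = x m := by
        intro x m
        rw [EuclideanSpace.inner_single_left, map_one, one_mul]
      have hS : ∀ a b : EuclideanSpace ℂ (Fin N),
          ∑ i, (p i : ℂ) * ((⟪v i, a⟫_ℂ) * (⟪b, v i⟫_ℂ)) = ⟪b, a⟫_ℂ := by
        intro a b
        simp only [PiLp.inner_apply, RCLike.inner_apply']
        have step : ∀ i, (p i : ℂ) *
            ((∑ m, (starRingEnd ℂ) (v i m) * a m) * (∑ n, (starRingEnd ℂ) (b n) * v i n))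
            = ∑ m, ∑ n, ((starRingEnd ℂ) (b n) * a m) *
                ((p i : ℂ) * ((starRingEnd ℂ) (v i m) * v i n)) := by
          intro i
          rw [Finset.sum_mul_sum, Finset.mul_sum]
          refine Finset.sum_congr rfl fun m _ => ?_
          rw [Finset.mul_sum]
          refine Finset.sum_congr rfl fun n _ => ?_
          ring
        rw [Finset.sum_congr rfl fun i _ => step i, Finset.sum_comm]
        have step2 : ∀ m, ∑ i, ∑ n, ((starRingEnd ℂ) (b n) * a m) *
            ((p i : ℂ) * ((starRingEnd ℂ) (v i m) * v i n))
            = (starRingEnd ℂ) (b m) * a m := by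
          intro m
          rw [Finset.sum_comm]
          have : ∀ n, ∑ i, ((starRingEnd ℂ) (b n) * a m) *
              ((p i : ℂ) * ((starRingEnd ℂ) (v i m) * v i n))
              = ((starRingEnd ℂ) (b n) * a m) * (if m = n then 1 else 0) := by
            intro n
            rw [← Finset.mul_sum, hn m n]
          rw [Finset.sum_congr rfl fun n _ => this n]
          simp
        exact Finset.sum_congr rfl fun m _ => step2 m
      have key : ∀ i, (p i : ℂ) * ((starRingEnd ℂ) (w i k) * w i l)
          = (p i : ℂ) * ((⟪v i, U.symm (EuclideanSpace.single k (1:ℂ))⟫_ℂ) *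
              (⟪U.symm (EuclideanSpace.single l (1:ℂ)), v i⟫_ℂ)) := by
        intro i
        congr 1
        have e1 : (starRingEnd ℂ) (w i k)
            = ⟪v i, U.symm (EuclideanSpace.single k (1:ℂ))⟫_ℂ := by
          rw [hU i, ← hproj (U (v i)) k, inner_conj_symm]
          have : (⟪U (v i), EuclideanSpace.single k (1:ℂ)⟫_ℂ)
              = ⟪U (v i), U (U.symm (EuclideanSpace.single k (1:ℂ)))⟫_ℂ := by
            rw [U.apply_symm_apply]
          rw [this, U.inner_map_map]
        have e2 : w i l = ⟪U.symm (EuclideanSpace.single l (1:ℂ)), v i⟫_ℂ := by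
          rw [hU i, ← hproj (U (v i)) l]
          have : (⟪EuclideanSpace.single l (1:ℂ), U (v i)⟫_ℂ)
              = ⟪U (U.symm (EuclideanSpace.single l (1:ℂ))), U (v i)⟫_ℂ := by
            rw [U.apply_symm_apply]
          rw [this, U.inner_map_map]
        rw [e1, e2]
      rw [Finset.sum_congr rfl fun i _ => key i, hS]
      rw [(U.symm).inner_map_map, EuclideanSpace.inner_single_left, map_one, one_mul,
        EuclideanSpace.single_apply]
      simp [eq_comm]
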